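/- Define g_D(s) = (μ(s) − D)/(k μ'(s)) + D(s_in − s)/(k μ(s)) and h^a_D(s) = D(s_in − s_a(D))/(k μ(s)). Then for all s ∈ (0, s̄), g_D(s) ≥ h^a_D(s). -/

import Mathlib

/-- On (0, s̄), the nullcline ẏ = 0 is above the isoline y = y_a(D):
g_D(s) ≥ h^a_D(s). -/
theorem nullcline_above_isoline_a (μbar kS kI k sin D sa : ℝ) (hμbar : 0 < μbar)
    (hkS : 0 < kS) (hkI : 0 < kI) (hk : 0 < k) (hsin : 0 < sin)
    (μ dμ : ℝ → ℝ)
    (hμ : ∀ s : ℝ, μ s = μbar * s / (kS + s + s ^ 2 / kI))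
    (hdμ : ∀ s : ℝ, 0 < s → HasDerivAt μ (dμ s) s)
    (hD0 : 0 < D) (hD : D < μ (Real.sqrt (kS * kI)))
    (hsa0 : 0 < sa) (hsab : sa < Real.sqrt (kS * kI)) (hroot : μ sa = D) :
    ∀ s : ℝ, 0 < s → s < Real.sqrt (kS * kI) →
      (μ s - D) / (k * dμ s) + D * (sin - s) / (k * μ s)
        ≥ D * (sin - sa) / (k * μ s) := by
  intro s hs hsb
  have hkIkS : 0 < kS * kI := mul_pos hkS hkI
  have hs2 : s ^ 2 < kS * kI := (Real.lt_sqrt hs.le).mp hsb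
  have hsa2 : sa ^ 2 < kS * kI := (Real.lt_sqrt hsa0.le).mp hsab
  have hq : 0 < kS + s + s ^ 2 / kI := by positivity
  have hqa : 0 < kS + sa + sa ^ 2 / kI := by positivity
  -- value of μ s
  have hμs : μ s = μbar * s / (kS + s + s ^ 2 / kI) := hμ s
  have hμs0 : 0 < μ s := by rw [hμs]; positivity
  -- D value
  have hDval : D = μbar * sa / (kS + sa + sa ^ 2 / kI) := by rw [← hroot, hμ]
  -- derivative
  have hderiv : HasDerivAt μ (μbar * (kS - s ^ 2 / kI) / (kS + s + s ^ 2 / kI) ^ 2) s := by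
    have h1 : HasDerivAt (fun x : ℝ => μbar * x) μbar s := by
      simpa using (hasDerivAt_id s).const_mul μbar
    have h2 : HasDerivAt (fun x : ℝ => kS + x + x ^ 2 / kI) (1 + 2 * s / kI) s := by
      have h := ((hasDerivAt_const s kS).add (hasDerivAt_id s)).add
        ((hasDerivAt_pow 2 s).div_const kI)
      refine h.congr_deriv ?_
      push_cast
      ring
    have h3 := h1.div h2 (ne_of_gt hq)
    have : HasDerivAt (fun x : ℝ => μbar * x / (kS + x + x ^ 2 / kI))
        (μbar * (kS - s ^ 2 / kI) / (kS + s + s ^ 2 / kI) ^ 2) s := by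
      refine h3.congr_deriv ?_
      field_simp
      ring
    exact this.congr_of_eventuallyEq (by filter_upwards with x; rw [hμ x])
  have hdμs : dμ s = μbar * (kS - s ^ 2 / kI) / (kS + s + s ^ 2 / kI) ^ 2 :=
    (hdμ s hs).unique hderiv
  have hnum : 0 < kS - s ^ 2 / kI := by
    rw [sub_pos, div_lt_iff₀ hkI]; nlinarith
  have hdμ0 : 0 < dμ s := by rw [hdμs]; positivity
  -- key inequality
  have key : D * (s - sa) / (k * μ s) ≤ (μ s - D) / (k * dμ s) := by
    rw [div_le_div_iff₀ (by positivity) (by positivity), hμs, hdμs, hDval]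
    rw [← sub_nonneg]
    have hid : (μbar * s / (kS + s + s ^ 2 / kI) - μbar * sa / (kS + sa + sa ^ 2 / kI)) *
          (k * (μbar * s / (kS + s + s ^ 2 / kI))) -
        μbar * sa / (kS + sa + sa ^ 2 / kI) * (s - sa) *
          (k * (μbar * (kS - s ^ 2 / kI) / (kS + s + s ^ 2 / kI) ^ 2)) =
        k * μbar ^ 2 * kS * (s - sa) ^ 2 /
          ((kS + s + s ^ 2 / kI) ^ 2 * (kS + sa + sa ^ 2 / kI)) := by
      field_simp
      ring
    rw [hid]
    positivity
  have hsplit : D * (sin - s) / (k * μ s) = D * (sin - sa) / (k * μ s) - D * (s - sa) / (k * μ s) := by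
    rw [div_sub_div_same]; ring_nf
  linarith [key, hsplit.ge, hsplit.le]
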